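/- arXiv:2011.03776 — 2 statements merged into one kernel-verified Lean document; each statement's English description precedes it below -/
import Mathlib

section
/- Under the assumptions that A is real symmetric with A𝟏=0, Ax = e_R − e_L, and the central block Ā invertible, the matrix A⁺ = (I − 𝟏𝟏ᵀ/(n+1)) G₂ (I − 𝟏𝟏ᵀ/(n+1)) + (x − 𝟏/2)(x − 𝟏/2)ᵀ is the Moore–Penrose pseudoinverse of A, i.e., it satisfies AA⁺A = A, A⁺AA⁺ = A⁺, (AA⁺)ᵀ = AA⁺ and (A⁺A)ᵀ = A⁺A. -/
open Matrix

noncomputable section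

def onesVec (n : ℕ) : Fin (n+1) → ℝ := fun _ => 1

def gridVec (n : ℕ) : Fin (n+1) → ℝ := fun i => (i : ℝ) / n

def eL (n : ℕ) : Fin (n+1) → ℝ := fun i => if i.1 = 0 then 1 else 0

def eR (n : ℕ) : Fin (n+1) → ℝ := fun i => if i.1 = n then 1 else 0

def interiorEmb (n : ℕ) : Fin (n-1) → Fin (n+1) :=
  fun i => ⟨i.1 + 1, by have := i.isLt; omega⟩

def centralBlock (n : ℕ) (A : Matrix (Fin (n+1)) (Fin (n+1)) ℝ) :
    Matrix (Fin (n-1)) (Fin (n-1)) ℝ :=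
  A.submatrix (interiorEmb n) (interiorEmb n)

def pad (n : ℕ) (B : Matrix (Fin (n-1)) (Fin (n-1)) ℝ) :
    Matrix (Fin (n+1)) (Fin (n+1)) ℝ :=
  fun i j =>
    if hi : 0 < i.1 ∧ i.1 < n then
      if hj : 0 < j.1 ∧ j.1 < n then
        B ⟨i.1 - 1, by omega⟩ ⟨j.1 - 1, by omega⟩
      else 0
    else 0

def G2 (n : ℕ) (A : Matrix (Fin (n+1)) (Fin (n+1)) ℝ) :
    Matrix (Fin (n+1)) (Fin (n+1)) ℝ :=
  pad n (centralBlock n A)⁻¹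

def Aplus (n : ℕ) (A : Matrix (Fin (n+1)) (Fin (n+1)) ℝ) :
    Matrix (Fin (n+1)) (Fin (n+1)) ℝ :=
  (1 - ((n : ℝ) + 1)⁻¹ • vecMulVec (onesVec n) (onesVec n)) * G2 n A *
      (1 - ((n : ℝ) + 1)⁻¹ • vecMulVec (onesVec n) (onesVec n)) +
    vecMulVec (gridVec n - (1/2 : ℝ) • onesVec n)
      (gridVec n - (1/2 : ℝ) • onesVec n)

open Finset in
lemma sum_split (m : ℕ) (f : Fin (m+2+1) → ℝ) :
    ∑ j, f j = f 0 + (∑ k : Fin (m+1), f (interiorEmb (m+2) k)) + f ⟨m+2, by omega⟩ := by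
  rw [Fin.sum_univ_succ, Fin.sum_univ_castSucc]
  have h1 : ∀ k : Fin (m+1), Fin.succ (Fin.castSucc k) = interiorEmb (m+2) k := by
    intro k; apply Fin.ext; simp [interiorEmb]
  have h2 : Fin.succ (Fin.last (m+1)) = (⟨m+2, by omega⟩ : Fin (m+2+1)) := by
    apply Fin.ext; simp [Fin.last]
  simp only [h1, h2]
  ring

lemma gauss (m : ℕ) : ∑ k : Fin (m+1), ((k : ℝ) + 1) = (m+1)*(m+2)/2 := by
  induction m with
  | zero => simp
  | succ p ih =>
    rw [Fin.sum_univ_castSucc]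
    push_cast at ih ⊢
    simp only [Fin.coe_castSucc]
    rw [ih]; ring

-- matrix helpers
lemma mul_vecMulVec {N : Type*} [Fintype N] [DecidableEq N]
    (M : Matrix N N ℝ) (u w : N → ℝ) :
    M * vecMulVec u w = vecMulVec (M *ᵥ u) w := by
  ext i j
  simp [Matrix.mul_apply, vecMulVec_apply, mulVec, dotProduct, Finset.sum_mul, mul_assoc]

lemma vecMulVec_mul {N : Type*} [Fintype N] [DecidableEq N]
    (M : Matrix N N ℝ) (u w : N → ℝ) :
    vecMulVec u w * M = vecMulVec u (Mᵀ *ᵥ w) := by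
  ext i j
  simp [Matrix.mul_apply, vecMulVec_apply, mulVec, dotProduct, Finset.mul_sum, transpose]
  congr 1; ext k; ring

lemma vecMulVec_mulVec {N : Type*} [Fintype N] [DecidableEq N]
    (u w v : N → ℝ) :
    vecMulVec u w *ᵥ v = (w ⬝ᵥ v) • u := by
  ext i
  simp [vecMulVec_apply, mulVec, dotProduct, Finset.sum_mul, Finset.mul_sum]
  congr 1; ext k; ring

lemma vecMulVec_transp {N : Type*} (u w : N → ℝ) :
    (vecMulVec u w)ᵀ = vecMulVec w u := by
  ext i j; simp [vecMulVec_apply, mul_comm]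

section Structural
variable (m : ℕ) (A : Matrix (Fin (m+2+1)) (Fin (m+2+1)) ℝ)

lemma sum_interior (f : Fin (m+2-1) → ℝ) :
    ∑ k : Fin (m+2-1), f k = ∑ k : Fin (m+1), f ⟨k.1, by omega⟩ := by
  apply Fintype.sum_equiv (finCongr (by omega : m+2-1 = m+1))
  intro k
  congr 1

lemma sum_split' (f : Fin (m+2+1) → ℝ) :
    ∑ j, f j = f 0 + (∑ k : Fin (m+2-1), f (interiorEmb (m+2) k)) + f ⟨m+2, by omega⟩ := by
  rw [sum_split m f, sum_interior m (fun k => f (interiorEmb (m+2) k))]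
  congr 2

def aVec : Fin (m+2-1) → ℝ := fun k => A (interiorEmb (m+2) k) 0
def bVec : Fin (m+2-1) → ℝ := fun k => A (interiorEmb (m+2) k) ⟨m+2, by omega⟩
def xbar : Fin (m+2-1) → ℝ := fun k => ((k : ℝ) + 1)/((m : ℝ)+2)

lemma gridVec_emb (k : Fin (m+2-1)) : gridVec (m+2) (interiorEmb (m+2) k) = xbar m k := by
  simp [gridVec, xbar, interiorEmb]

lemma block_apply (k l : Fin (m+2-1)) :
    centralBlock (m+2) A k l = A (interiorEmb (m+2) k) (interiorEmb (m+2) l) := rfl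

lemma block_ones (h1 : A *ᵥ onesVec (m+2) = 0) :
    centralBlock (m+2) A *ᵥ (fun _ => (1:ℝ)) = fun k => -(aVec m A k + bVec m A k) := by
  funext k
  have h := congrFun h1 (interiorEmb (m+2) k)
  simp only [mulVec, dotProduct, Pi.zero_apply, onesVec, mul_one] at h
  rw [sum_split' m (fun j => A (interiorEmb (m+2) k) j)] at h
  have : (centralBlock (m+2) A *ᵥ fun _ => (1:ℝ)) k
      = ∑ l : Fin (m+2-1), A (interiorEmb (m+2) k) (interiorEmb (m+2) l) := by
    simp [mulVec, dotProduct, block_apply]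
  rw [this, aVec, bVec]
  linarith [h]

lemma block_grid (hx : A *ᵥ gridVec (m+2) = eR (m+2) - eL (m+2)) :
    centralBlock (m+2) A *ᵥ xbar m = fun k => -(bVec m A k) := by
  funext k
  have h := congrFun hx (interiorEmb (m+2) k)
  simp only [mulVec, dotProduct] at h
  rw [sum_split' m (fun j => A (interiorEmb (m+2) k) j * gridVec (m+2) j)] at h
  have hkm : k.1 < m + 1 := by have := k.isLt; omega
  have h0 : (eR (m+2) - eL (m+2)) (interiorEmb (m+2) k) = 0 := by
    simp only [Pi.sub_apply, eR, eL, interiorEmb]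
    rw [if_neg (by omega), if_neg (by omega)]; ring
  have hg0 : gridVec (m+2) 0 = 0 := by simp [gridVec]
  have hgn : gridVec (m+2) ⟨m+2, by omega⟩ = 1 := by
    simp only [gridVec]
    rw [div_self (by push_cast; positivity)]
  rw [h0, hg0, hgn] at h
  simp only [gridVec_emb] at h
  have hmv : (centralBlock (m+2) A *ᵥ xbar m) k
      = ∑ l : Fin (m+2-1), A (interiorEmb (m+2) k) (interiorEmb (m+2) l) * xbar m l := by
    simp [mulVec, dotProduct, block_apply]
  rw [hmv, bVec]
  linarith [h]

lemma block_diff (h1 : A *ᵥ onesVec (m+2) = 0)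
    (hx : A *ᵥ gridVec (m+2) = eR (m+2) - eL (m+2)) :
    centralBlock (m+2) A *ᵥ (fun k => xbar m k - 1) = aVec m A := by
  have hg := block_grid m A hx
  have ho := block_ones m A h1
  have hsub : (fun k => xbar m k - 1) = xbar m - (fun _ => (1:ℝ)) := rfl
  rw [hsub, Matrix.mulVec_sub, hg, ho]
  funext k; simp

lemma inv_a (h1 : A *ᵥ onesVec (m+2) = 0)
    (hx : A *ᵥ gridVec (m+2) = eR (m+2) - eL (m+2))
    (hinv : IsUnit (centralBlock (m+2) A).det) :
    (centralBlock (m+2) A)⁻¹ *ᵥ aVec m A = fun k => xbar m k - 1 := by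
  rw [← block_diff m A h1 hx, Matrix.mulVec_mulVec, Matrix.nonsing_inv_mul _ hinv,
    Matrix.one_mulVec]

lemma inv_b (hx : A *ᵥ gridVec (m+2) = eR (m+2) - eL (m+2))
    (hinv : IsUnit (centralBlock (m+2) A).det) :
    (centralBlock (m+2) A)⁻¹ *ᵥ bVec m A = fun k => -(xbar m k) := by
  have hb : bVec m A = centralBlock (m+2) A *ᵥ (fun k => -(xbar m k)) := by
    have hneg : (fun k => -(xbar m k)) = -(xbar m) := rfl
    rw [hneg, Matrix.mulVec_neg, block_grid m A hx]
    funext k; simp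
  rw [hb, Matrix.mulVec_mulVec, Matrix.nonsing_inv_mul _ hinv, Matrix.one_mulVec]

lemma block_symm (hsym : A.IsSymm) :
    (centralBlock (m+2) A)ᵀ = centralBlock (m+2) A := by
  ext k l
  exact hsym.apply (interiorEmb (m+2) k) (interiorEmb (m+2) l)

lemma blockinv_symm (hsym : A.IsSymm) :
    ((centralBlock (m+2) A)⁻¹)ᵀ = (centralBlock (m+2) A)⁻¹ := by
  rw [Matrix.transpose_nonsing_inv, block_symm m A hsym]

lemma pad_apply_emb (B : Matrix (Fin (m+2-1)) (Fin (m+2-1)) ℝ) (k : Fin (m+2-1)) (j : Fin (m+2+1))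
    (hj : 0 < j.1 ∧ j.1 < m+2) :
    pad (m+2) B (interiorEmb (m+2) k) j = B k ⟨j.1 - 1, by omega⟩ := by
  have hkm : k.1 < m + 1 := by have := k.isLt; omega
  have hk : 0 < (interiorEmb (m+2) k).1 ∧ (interiorEmb (m+2) k).1 < m+2 := by
    simp only [interiorEmb]; omega
  show (if hi : _ then _ else _) = _
  rw [dif_pos hk, dif_pos hj]
  congr 1

lemma pad_apply_left (B : Matrix (Fin (m+2-1)) (Fin (m+2-1)) ℝ) (j : Fin (m+2+1)) :
    pad (m+2) B 0 j = 0 := by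
  show (if hi : _ then _ else _) = _
  rw [dif_neg]; simp

lemma pad_apply_right (B : Matrix (Fin (m+2-1)) (Fin (m+2-1)) ℝ) (j : Fin (m+2+1)) :
    pad (m+2) B ⟨m+2, by omega⟩ j = 0 := by
  show (if hi : _ then _ else _) = _
  rw [dif_neg]; simp

lemma pad_apply_notint (B : Matrix (Fin (m+2-1)) (Fin (m+2-1)) ℝ) (i j : Fin (m+2+1))
    (hj : ¬(0 < j.1 ∧ j.1 < m+2)) :
    pad (m+2) B i j = 0 := by
  by_cases hi : 0 < i.1 ∧ i.1 < m+2
  · show (if hi' : _ then _ else _) = _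
    rw [dif_pos hi, dif_neg hj]
  · show (if hi' : _ then _ else _) = _
    rw [dif_neg hi]

set_option maxHeartbeats 2000000 in
lemma AG2_apply (hsym : A.IsSymm) (h1 : A *ᵥ onesVec (m+2) = 0)
    (hx : A *ᵥ gridVec (m+2) = eR (m+2) - eL (m+2))
    (hinv : IsUnit (centralBlock (m+2) A).det) (i j : Fin (m+2+1)) :
    (A * G2 (m+2) A) i j =
      if 0 < j.1 ∧ j.1 < m+2 then
        (if i.1 = 0 then gridVec (m+2) j - 1
         else if i.1 = m+2 then -(gridVec (m+2) j)
         else if i = j then 1 else 0)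
      else 0 := by
  rw [Matrix.mul_apply, sum_split' m (fun k => A i k * G2 (m+2) A k j)]
  by_cases hj : 0 < j.1 ∧ j.1 < m+2
  · have hje : interiorEmb (m+2) (⟨j.1 - 1, Nat.sub_lt_sub_right hj.1 hj.2⟩ : Fin (m+2-1)) = j := by
      apply Fin.ext; show j.1 - 1 + 1 = j.1; omega
    rw [if_pos hj]
    have e0 : G2 (m+2) A 0 j = 0 := pad_apply_left m _ j
    have en : G2 (m+2) A ⟨m+2, Nat.lt_succ_self _⟩ j = 0 := pad_apply_right m _ j
    have hG : ∀ k : Fin (m+2-1), G2 (m+2) A (interiorEmb (m+2) k) j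
        = (centralBlock (m+2) A)⁻¹ k ⟨j.1 - 1, Nat.sub_lt_sub_right hj.1 hj.2⟩ :=
      fun k => pad_apply_emb m _ k j hj
    rw [e0, en]
    simp only [hG, mul_zero, add_zero, zero_add]
    by_cases hi0 : i.1 = 0
    · rw [if_pos hi0]
      have hi : i = 0 := Fin.ext hi0
      have hA : ∀ k : Fin (m+2-1), A i (interiorEmb (m+2) k) = aVec m A k := by
        intro k
        rw [hi, aVec]
        exact hsym.apply (interiorEmb (m+2) k) 0
      have hBsym : ∀ k l : Fin (m+2-1),
          (centralBlock (m+2) A)⁻¹ k l = (centralBlock (m+2) A)⁻¹ l k := by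
        intro k l
        have h := congrFun (congrFun (blockinv_symm m A hsym) l) k
        rw [Matrix.transpose_apply] at h
        exact h
      have hsv : ∑ k : Fin (m+2-1), A i (interiorEmb (m+2) k)
            * (centralBlock (m+2) A)⁻¹ k ⟨j.1 - 1, Nat.sub_lt_sub_right hj.1 hj.2⟩
          = ((centralBlock (m+2) A)⁻¹ *ᵥ aVec m A) ⟨j.1 - 1, Nat.sub_lt_sub_right hj.1 hj.2⟩ := by
        simp only [mulVec, dotProduct]
        apply Finset.sum_congr rfl
        intro k _
        rw [hA k, hBsym k ⟨j.1 - 1, Nat.sub_lt_sub_right hj.1 hj.2⟩]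
        exact mul_comm _ _
      rw [hsv, inv_a m A h1 hx hinv]
      show xbar m ⟨j.1 - 1, Nat.sub_lt_sub_right hj.1 hj.2⟩ - 1 = gridVec (m+2) j - 1
      have hg : gridVec (m+2) j = xbar m ⟨j.1 - 1, Nat.sub_lt_sub_right hj.1 hj.2⟩ := by
        conv_lhs => rw [← hje]
        rw [gridVec_emb]
      rw [hg]
    · rw [if_neg hi0]
      by_cases hin : i.1 = m+2
      · rw [if_pos hin]
        have hi : i = ⟨m+2, Nat.lt_succ_self _⟩ := Fin.ext hin
        have hA : ∀ k : Fin (m+2-1), A i (interiorEmb (m+2) k) = bVec m A k := by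
          intro k
          rw [hi, bVec]
          exact hsym.apply (interiorEmb (m+2) k) ⟨m+2, Nat.lt_succ_self _⟩
        have hBsym : ∀ k l : Fin (m+2-1),
            (centralBlock (m+2) A)⁻¹ k l = (centralBlock (m+2) A)⁻¹ l k := by
          intro k l
          have h := congrFun (congrFun (blockinv_symm m A hsym) l) k
          rw [Matrix.transpose_apply] at h
          exact h
        have hsv : ∑ k : Fin (m+2-1), A i (interiorEmb (m+2) k)
              * (centralBlock (m+2) A)⁻¹ k ⟨j.1 - 1, Nat.sub_lt_sub_right hj.1 hj.2⟩
            = ((centralBlock (m+2) A)⁻¹ *ᵥ bVec m A) ⟨j.1 - 1, Nat.sub_lt_sub_right hj.1 hj.2⟩ := by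
          simp only [mulVec, dotProduct]
          apply Finset.sum_congr rfl
          intro k _
          rw [hA k, hBsym k ⟨j.1 - 1, Nat.sub_lt_sub_right hj.1 hj.2⟩]
          exact mul_comm _ _
        rw [hsv, inv_b m A hx hinv]
        show -(xbar m ⟨j.1 - 1, Nat.sub_lt_sub_right hj.1 hj.2⟩) = -(gridVec (m+2) j)
        have hg : gridVec (m+2) j = xbar m ⟨j.1 - 1, Nat.sub_lt_sub_right hj.1 hj.2⟩ := by
          conv_lhs => rw [← hje]
          rw [gridVec_emb]
        rw [hg]
      · rw [if_neg hin]
        have hii : 0 < i.1 ∧ i.1 < m+2 := by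
          have := i.isLt; omega
        set i' : Fin (m+2-1) := ⟨i.1 - 1, by omega⟩ with hi'def
        have hie : interiorEmb (m+2) i' = i := by
          apply Fin.ext; show i.1 - 1 + 1 = i.1; omega
        have hsv : ∑ k : Fin (m+2-1), A i (interiorEmb (m+2) k)
              * (centralBlock (m+2) A)⁻¹ k ⟨j.1 - 1, Nat.sub_lt_sub_right hj.1 hj.2⟩
            = (centralBlock (m+2) A * (centralBlock (m+2) A)⁻¹) i' ⟨j.1 - 1, Nat.sub_lt_sub_right hj.1 hj.2⟩ := by
          rw [Matrix.mul_apply]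
          apply Finset.sum_congr rfl
          intro k _
          rw [block_apply, hie]
        rw [hsv, Matrix.mul_nonsing_inv _ hinv, Matrix.one_apply]
        by_cases h : i = j
        · rw [if_pos h, if_pos]
          apply Fin.ext
          show i.1 - 1 = j.1 - 1
          rw [h]
        · rw [if_neg h, if_neg]
          intro hc
          apply h
          rw [← hie, ← hje]
          exact congrArg (interiorEmb (m+2)) hc
  · rw [if_neg hj]
    have hz : ∀ k : Fin (m+2+1), G2 (m+2) A k j = 0 := fun k => pad_apply_notint m _ k j hj
    simp [hz]

lemma xbar_sum : ∑ k : Fin (m+2-1), xbar m k = ((m:ℝ)+1)/2 := by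
  rw [sum_interior m (xbar m)]
  have he : ∀ k : Fin (m+1), xbar m ⟨k.1, by omega⟩ = ((k:ℝ)+1)/((m:ℝ)+2) := fun k => rfl
  rw [Finset.sum_congr rfl (fun k _ => he k), ← Finset.sum_div, gauss]
  have h2 : ((m:ℝ)+2) ≠ 0 := by positivity
  field_simp

lemma card_interior : (Finset.univ : Finset (Fin (m+2-1))).card = m+1 := by
  simp

lemma AG2_rowsum (hsym : A.IsSymm) (h1 : A *ᵥ onesVec (m+2) = 0)
    (hx : A *ᵥ gridVec (m+2) = eR (m+2) - eL (m+2))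
    (hinv : IsUnit (centralBlock (m+2) A).det) (i : Fin (m+2+1)) :
    ∑ j, (A * G2 (m+2) A) i j = if i.1 = 0 ∨ i.1 = m+2 then -(((m:ℝ)+1)/2) else 1 := by
  rw [sum_split' m (fun j => (A * G2 (m+2) A) i j)]
  have h0 : (A * G2 (m+2) A) i 0 = 0 := by
    rw [AG2_apply m A hsym h1 hx hinv]
    exact if_neg (by simp)
  have hn : (A * G2 (m+2) A) i ⟨m+2, Nat.lt_succ_self _⟩ = 0 := by
    rw [AG2_apply m A hsym h1 hx hinv]
    exact if_neg (by simp)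
  rw [h0, hn, zero_add, add_zero]
  have hck : ∀ k : Fin (m+2-1),
      0 < (interiorEmb (m+2) k).1 ∧ (interiorEmb (m+2) k).1 < m+2 := by
    intro k
    have := k.isLt
    simp only [interiorEmb]
    omega
  by_cases hi0 : i.1 = 0
  · rw [if_pos (Or.inl hi0)]
    have hv : ∀ k : Fin (m+2-1),
        (A * G2 (m+2) A) i (interiorEmb (m+2) k) = xbar m k - 1 := by
      intro k
      rw [AG2_apply m A hsym h1 hx hinv, if_pos (hck k), if_pos hi0, gridVec_emb]
    rw [Finset.sum_congr rfl (fun k _ => hv k), Finset.sum_sub_distrib, xbar_sum,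
      Finset.sum_const, card_interior]
    push_cast
    ring
  · by_cases hin : i.1 = m+2
    · rw [if_pos (Or.inr hin)]
      have hv : ∀ k : Fin (m+2-1),
          (A * G2 (m+2) A) i (interiorEmb (m+2) k) = -(xbar m k) := by
        intro k
        rw [AG2_apply m A hsym h1 hx hinv, if_pos (hck k), if_neg hi0, if_pos hin,
          gridVec_emb]
      rw [Finset.sum_congr rfl (fun k _ => hv k), Finset.sum_neg_distrib, xbar_sum]
    · rw [if_neg (by tauto)]
      have hii : 0 < i.1 ∧ i.1 < m+2 := by
        have := i.isLt
        omega
      have hie : interiorEmb (m+2) ⟨i.1 - 1, Nat.sub_lt_sub_right hii.1 hii.2⟩ = i := by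
        apply Fin.ext
        show i.1 - 1 + 1 = i.1
        omega
      have hv : ∀ k : Fin (m+2-1),
          (A * G2 (m+2) A) i (interiorEmb (m+2) k)
            = if k = ⟨i.1 - 1, Nat.sub_lt_sub_right hii.1 hii.2⟩ then (1:ℝ) else 0 := by
        intro k
        rw [AG2_apply m A hsym h1 hx hinv, if_pos (hck k), if_neg hi0, if_neg hin]
        by_cases h : k = ⟨i.1 - 1, Nat.sub_lt_sub_right hii.1 hii.2⟩
        · rw [if_pos h, if_pos]
          rw [h, hie]
        · rw [if_neg h, if_neg]
          intro hc2
          apply h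
          apply Fin.ext
          have : i.1 = k.1 + 1 := by rw [hc2]; rfl
          show k.1 = i.1 - 1
          omega
      rw [Finset.sum_congr rfl (fun k _ => hv k),
        Finset.sum_ite_eq' Finset.univ _ (fun _ => (1:ℝ)), if_pos (Finset.mem_univ _)]

lemma A_mul_Aplus (hsym : A.IsSymm) (h1 : A *ᵥ onesVec (m+2) = 0)
    (hx : A *ᵥ gridVec (m+2) = eR (m+2) - eL (m+2))
    (hinv : IsUnit (centralBlock (m+2) A).det) :
    A * Aplus (m+2) A
      = 1 - (((m+2:ℕ):ℝ) + 1)⁻¹ • vecMulVec (onesVec (m+2)) (onesVec (m+2)) := by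
  have hc0 : (((m+2:ℕ):ℝ) + 1) ≠ 0 := by positivity
  set c : ℝ := (((m+2:ℕ):ℝ) + 1)⁻¹ with hc
  set W := vecMulVec (onesVec (m+2)) (onesVec (m+2)) with hW
  have hAW : A * W = 0 := by
    rw [hW, _root_.mul_vecMulVec, h1]
    ext i j
    simp [vecMulVec_apply]
  have hAPM : A * (1 - c • W) = A := by
    rw [mul_sub, mul_one, Matrix.mul_smul, hAW, smul_zero, sub_zero]
  have hv : A *ᵥ (gridVec (m+2) - (1/2:ℝ) • onesVec (m+2)) = eR (m+2) - eL (m+2) := by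
    rw [Matrix.mulVec_sub, Matrix.mulVec_smul, hx, h1, smul_zero, sub_zero]
  have expand : A * Aplus (m+2) A
      = (A * G2 (m+2) A) * (1 - c • W)
        + vecMulVec (eR (m+2) - eL (m+2)) (gridVec (m+2) - (1/2:ℝ) • onesVec (m+2)) := by
    rw [Aplus, mul_add]
    congr 1
    · rw [← mul_assoc, ← mul_assoc, hAPM]
    · rw [_root_.mul_vecMulVec, hv]
  rw [expand]
  ext i j
  have hWap : ((A * G2 (m+2) A) * (c • W)) i j = c * ∑ k, (A * G2 (m+2) A) i k := by
    rw [Matrix.mul_smul, hW, _root_.mul_vecMulVec]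
    simp only [Matrix.smul_apply, vecMulVec_apply, smul_eq_mul, onesVec, mulVec,
      dotProduct, mul_one]
  have lhs1 : ((A * G2 (m+2) A) * (1 - c • W)) i j
      = (A * G2 (m+2) A) i j - c * ∑ k, (A * G2 (m+2) A) i k := by
    rw [mul_sub, mul_one, Matrix.sub_apply, hWap]
  rw [Matrix.add_apply, lhs1, AG2_rowsum m A hsym h1 hx hinv i,
    AG2_apply m A hsym h1 hx hinv i j, Matrix.sub_apply, Matrix.smul_apply,
    Matrix.one_apply]
  simp only [hW, vecMulVec_apply, Pi.sub_apply, Pi.smul_apply, onesVec, smul_eq_mul,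
    eR, eL, mul_one]
  have htri : ∀ l : Fin (m+2+1), l.1 = 0 ∨ (0 < l.1 ∧ l.1 < m+2) ∨ l.1 = m+2 := by
    intro l
    have := l.isLt
    omega
  have hg0 : ∀ l : Fin (m+2+1), l.1 = 0 → gridVec (m+2) l = 0 := by
    intro l hl
    simp [gridVec, hl]
  have hgn : ∀ l : Fin (m+2+1), l.1 = m+2 → gridVec (m+2) l = 1 := by
    intro l hl
    simp only [gridVec, hl]
    rw [div_self (by positivity)]
  rcases htri i with hi | hi | hi <;> rcases htri j with hj | hj | hj
  · -- i=0, j=0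
    rw [if_neg (show ¬(0 < j.1 ∧ j.1 < m+2) by omega),
      if_pos (show i.1 = 0 ∨ i.1 = m+2 from Or.inl hi),
      if_neg (show ¬i.1 = m+2 by omega), if_pos hi,
      if_pos (show i = j from Fin.ext (by omega)), hg0 j hj, hc]
    field_simp
    push_cast
    ring
  · -- i=0, j int
    rw [if_pos hj, if_pos hi,
      if_pos (show i.1 = 0 ∨ i.1 = m+2 from Or.inl hi),
      if_neg (show ¬i.1 = m+2 by omega), if_pos hi,
      if_neg (show i ≠ j from fun h => by rw [h] at hi; omega), hc]
    field_simp
    push_cast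
    ring
  · -- i=0, j=m+2
    rw [if_neg (show ¬(0 < j.1 ∧ j.1 < m+2) by omega),
      if_pos (show i.1 = 0 ∨ i.1 = m+2 from Or.inl hi),
      if_neg (show ¬i.1 = m+2 by omega), if_pos hi,
      if_neg (show i ≠ j from fun h => by rw [h] at hi; omega), hgn j hj, hc]
    field_simp
    push_cast
    ring
  · -- i int, j=0
    rw [if_neg (show ¬(0 < j.1 ∧ j.1 < m+2) by omega),
      if_neg (show ¬(i.1 = 0 ∨ i.1 = m+2) by omega),
      if_neg (show ¬i.1 = m+2 by omega), if_neg (show ¬i.1 = 0 by omega),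
      if_neg (show i ≠ j from fun h => by rw [h] at hi; omega), hg0 j hj]
    ring
  · -- i int, j int
    rw [if_pos hj, if_neg (show ¬i.1 = 0 by omega), if_neg (show ¬i.1 = m+2 by omega),
      if_neg (show ¬(i.1 = 0 ∨ i.1 = m+2) by omega),
      if_neg (show ¬i.1 = m+2 by omega), if_neg (show ¬i.1 = 0 by omega)]
    ring
  · -- i int, j=m+2
    rw [if_neg (show ¬(0 < j.1 ∧ j.1 < m+2) by omega),
      if_neg (show ¬(i.1 = 0 ∨ i.1 = m+2) by omega),
      if_neg (show ¬i.1 = m+2 by omega), if_neg (show ¬i.1 = 0 by omega),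
      if_neg (show i ≠ j from fun h => by rw [h] at hi; omega), hgn j hj]
    ring
  · -- i=m+2, j=0
    rw [if_neg (show ¬(0 < j.1 ∧ j.1 < m+2) by omega),
      if_pos (show i.1 = 0 ∨ i.1 = m+2 from Or.inr hi),
      if_pos hi, if_neg (show ¬i.1 = 0 by omega),
      if_neg (show i ≠ j from fun h => by rw [h] at hi; omega), hg0 j hj, hc]
    field_simp
    push_cast
    ring
  · -- i=m+2, j int
    rw [if_pos hj, if_neg (show ¬i.1 = 0 by omega), if_pos hi,
      if_pos (show i.1 = 0 ∨ i.1 = m+2 from Or.inr hi),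
      if_pos hi, if_neg (show ¬i.1 = 0 by omega),
      if_neg (show i ≠ j from fun h => by rw [h] at hi; omega), hc]
    field_simp
    push_cast
    ring
  · -- i=m+2, j=m+2
    rw [if_neg (show ¬(0 < j.1 ∧ j.1 < m+2) by omega),
      if_pos (show i.1 = 0 ∨ i.1 = m+2 from Or.inr hi),
      if_pos hi, if_neg (show ¬i.1 = 0 by omega),
      if_pos (show i = j from Fin.ext (by omega)), hgn j hj, hc]
    field_simp
    push_cast
    ring

lemma pad_row0 (B : Matrix (Fin (m+2-1)) (Fin (m+2-1)) ℝ) (i j : Fin (m+2+1))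
    (hi : ¬(0 < i.1 ∧ i.1 < m+2)) : pad (m+2) B i j = 0 := by
  show (if h : _ then _ else _) = _
  rw [dif_neg hi]

lemma pad_apply_int (B : Matrix (Fin (m+2-1)) (Fin (m+2-1)) ℝ) (i j : Fin (m+2+1))
    (hi : 0 < i.1 ∧ i.1 < m+2) (hj : 0 < j.1 ∧ j.1 < m+2) :
    pad (m+2) B i j
      = B ⟨i.1 - 1, Nat.sub_lt_sub_right hi.1 hi.2⟩ ⟨j.1 - 1, Nat.sub_lt_sub_right hj.1 hj.2⟩ := by
  have hie : interiorEmb (m+2) ⟨i.1 - 1, Nat.sub_lt_sub_right hi.1 hi.2⟩ = i := by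
    apply Fin.ext
    show i.1 - 1 + 1 = i.1
    omega
  have h := pad_apply_emb m B ⟨i.1 - 1, Nat.sub_lt_sub_right hi.1 hi.2⟩ j hj
  rw [hie] at h
  exact h

lemma G2_symm (hsym : A.IsSymm) : (G2 (m+2) A)ᵀ = G2 (m+2) A := by
  ext i j
  rw [Matrix.transpose_apply]
  by_cases hi : 0 < i.1 ∧ i.1 < m+2
  · by_cases hj : 0 < j.1 ∧ j.1 < m+2
    · rw [G2, pad_apply_int m _ j i hj hi, pad_apply_int m _ i j hi hj]
      have h := congrFun (congrFun (blockinv_symm m A hsym)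
        ⟨i.1 - 1, Nat.sub_lt_sub_right hi.1 hi.2⟩) ⟨j.1 - 1, Nat.sub_lt_sub_right hj.1 hj.2⟩
      rw [Matrix.transpose_apply] at h
      exact h
    · rw [G2, pad_row0 m _ j i hj, pad_apply_notint m _ i j hj]
  · rw [G2, pad_apply_notint m _ j i hi, pad_row0 m _ i j hi]

lemma Aplus_symm (hsym : A.IsSymm) : (Aplus (m+2) A)ᵀ = Aplus (m+2) A := by
  rw [Aplus, transpose_add, transpose_mul, transpose_mul, vecMulVec_transp,
    transpose_sub, transpose_one, transpose_smul, vecMulVec_transp, G2_symm m A hsym,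
    ← mul_assoc]

lemma grid_sum : ∑ j, gridVec (m+2) j = ((m:ℝ)+3)/2 := by
  rw [sum_split' m (gridVec (m+2))]
  have hg0 : gridVec (m+2) 0 = 0 := by simp [gridVec]
  have hgn : gridVec (m+2) ⟨m+2, Nat.lt_succ_self _⟩ = 1 := by
    simp only [gridVec]
    rw [div_self (by positivity)]
  rw [hg0, hgn, Finset.sum_congr rfl (fun k _ => gridVec_emb m k), xbar_sum]
  ring

lemma ones_dot : onesVec (m+2) ⬝ᵥ onesVec (m+2) = ((m+2:ℕ):ℝ) + 1 := by
  simp only [dotProduct, onesVec, mul_one]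
  rw [Finset.sum_const, Finset.card_univ, Fintype.card_fin]
  push_cast
  ring

lemma v_dot_ones : (gridVec (m+2) - (1/2:ℝ) • onesVec (m+2)) ⬝ᵥ onesVec (m+2) = 0 := by
  simp only [dotProduct, Pi.sub_apply, Pi.smul_apply, onesVec, smul_eq_mul, mul_one]
  rw [Finset.sum_sub_distrib, grid_sum, Finset.sum_const, Finset.card_univ, Fintype.card_fin]
  push_cast
  ring

lemma Aplus_ones : Aplus (m+2) A *ᵥ onesVec (m+2) = 0 := by
  have hc0 : (((m+2:ℕ):ℝ) + 1) ≠ 0 := by positivity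
  have hPM1 : (1 - (((m+2:ℕ):ℝ) + 1)⁻¹ • vecMulVec (onesVec (m+2)) (onesVec (m+2)))
      *ᵥ onesVec (m+2) = 0 := by
    rw [Matrix.sub_mulVec, Matrix.one_mulVec, Matrix.smul_mulVec, _root_.vecMulVec_mulVec,
      ones_dot]
    funext i
    simp only [Pi.sub_apply, Pi.smul_apply, onesVec, smul_eq_mul, Pi.zero_apply, mul_one]
    field_simp
    ring
  rw [Aplus, Matrix.add_mulVec, ← Matrix.mulVec_mulVec, hPM1, Matrix.mulVec_zero,
    _root_.vecMulVec_mulVec, v_dot_ones, zero_smul, add_zero]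

end Structural

theorem Aplus_is_moore_penrose
    (n : ℕ) (hn : 2 ≤ n) (A : Matrix (Fin (n+1)) (Fin (n+1)) ℝ)
    (hsym : A.IsSymm)
    (h1 : A *ᵥ onesVec n = 0)
    (hx : A *ᵥ gridVec n = eR n - eL n)
    (hinv : IsUnit (centralBlock n A).det) :
    A * Aplus n A * A = A ∧
    Aplus n A * A * Aplus n A = Aplus n A ∧
    (A * Aplus n A)ᵀ = A * Aplus n A ∧
    (Aplus n A * A)ᵀ = Aplus n A * A := by
  obtain ⟨m, rfl⟩ : ∃ m, n = m + 2 := ⟨n - 2, by omega⟩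
  have key := A_mul_Aplus m A hsym h1 hx hinv
  have hApT : (Aplus (m+2) A)ᵀ = Aplus (m+2) A := Aplus_symm m A hsym
  have hPt : (1 - (((m+2:ℕ):ℝ) + 1)⁻¹ • vecMulVec (onesVec (m+2)) (onesVec (m+2)))ᵀ
      = 1 - (((m+2:ℕ):ℝ) + 1)⁻¹ • vecMulVec (onesVec (m+2)) (onesVec (m+2)) := by
    rw [transpose_sub, transpose_one, transpose_smul, vecMulVec_transp]
  have hApA : Aplus (m+2) A * A
      = 1 - (((m+2:ℕ):ℝ) + 1)⁻¹ • vecMulVec (onesVec (m+2)) (onesVec (m+2)) := by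
    have h2 : Aplus (m+2) A * A = (Aᵀ * (Aplus (m+2) A)ᵀ)ᵀ := by
      rw [← transpose_mul, transpose_transpose]
    rw [h2, hApT, hsym, key, hPt]
  have hzero : vecMulVec (onesVec (m+2)) (0 : Fin (m+2+1) → ℝ) = 0 := by
    ext i j
    simp [vecMulVec_apply]
  refine ⟨?_, ?_, ?_, ?_⟩
  · rw [key, sub_mul, one_mul, Matrix.smul_mul, _root_.vecMulVec_mul, hsym, h1, hzero,
      smul_zero, sub_zero]
  · rw [hApA, sub_mul, one_mul, Matrix.smul_mul, _root_.vecMulVec_mul, hApT, Aplus_ones m A,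
      hzero, smul_zero, sub_zero]
  · rw [key, hPt]
  · rw [hApA, hPt]
end
end

section
/- Let A be symmetric positive semi-definite with A𝟏 = 0 and Ax = e_R − e_L (as for an SBP second-derivative operator). Then A has exactly one zero eigenvalue (i.e., rank(A) = n) if and only if its central block Ā is invertible. -/
open Matrix

noncomputable section

-- Auxiliary development
section Aux

lemma interiorEmb_injective (n : ℕ) : Function.Injective (interiorEmb n) := by
  intro i j h
  have : i.1 + 1 = j.1 + 1 := congrArg Fin.val h
  exact Fin.ext (by omega)

/-- Pad a vector on interior indices with zeros at the boundary. -/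
def padVec (n : ℕ) (v : Fin (n-1) → ℝ) : Fin (n+1) → ℝ :=
  fun i => if h : 0 < i.1 ∧ i.1 < n then v ⟨i.1 - 1, by omega⟩ else 0

lemma padVec_interiorEmb (n : ℕ) (v : Fin (n-1) → ℝ) (k : Fin (n-1)) :
    padVec n v (interiorEmb n k) = v k := by
  have hk := k.isLt
  have h : 0 < (interiorEmb n k).1 ∧ (interiorEmb n k).1 < n := by
    simp only [interiorEmb]; omega
  simp only [padVec, dif_pos h]
  congr 1

lemma sum_interior_s8 (n : ℕ) (f : Fin (n+1) → ℝ)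
    (hf : ∀ i : Fin (n+1), ¬(0 < i.1 ∧ i.1 < n) → f i = 0) :
    ∑ i, f i = ∑ k : Fin (n-1), f (interiorEmb n k) := by
  classical
  have h1 : ∑ j ∈ Finset.univ.map ⟨interiorEmb n, interiorEmb_injective n⟩, f j
      = ∑ k : Fin (n-1), f (interiorEmb n k) := by
    rw [Finset.sum_map]; rfl
  rw [← h1]
  refine (Finset.sum_subset (Finset.subset_univ _) ?_).symm
  intro j _ hj
  refine hf j ?_
  intro hint
  refine hj ?_
  refine Finset.mem_map.2 ⟨⟨j.1 - 1, by omega⟩, Finset.mem_univ _, ?_⟩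
  exact Fin.ext (by simp [interiorEmb]; omega)

lemma mulVec_padVec_interior (n : ℕ) (A : Matrix (Fin (n+1)) (Fin (n+1)) ℝ)
    (v : Fin (n-1) → ℝ) (k : Fin (n-1)) :
    (A *ᵥ padVec n v) (interiorEmb n k) = (centralBlock n A *ᵥ v) k := by
  classical
  show ∑ j, A (interiorEmb n k) j * padVec n v j = _
  rw [sum_interior_s8 n (fun j => A (interiorEmb n k) j * padVec n v j)
    (by intro i hi; simp only [padVec, dif_neg hi, mul_zero, zero_mul])]
  simp only [padVec_interiorEmb]
  rfl

lemma dot_padVec (n : ℕ) (A : Matrix (Fin (n+1)) (Fin (n+1)) ℝ)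
    (v : Fin (n-1) → ℝ) :
    padVec n v ⬝ᵥ (A *ᵥ padVec n v) = ∑ k, v k * (centralBlock n A *ᵥ v) k := by
  classical
  show ∑ j, padVec n v j * (A *ᵥ padVec n v) j = _
  rw [sum_interior_s8 n (fun j => padVec n v j * (A *ᵥ padVec n v) j)
    (by intro i hi; simp only [padVec, dif_neg hi, mul_zero, zero_mul])]
  simp only [padVec_interiorEmb, mulVec_padVec_interior]

end Aux

theorem rank_n_iff_central_invertible
    (n : ℕ) (hn : 2 ≤ n) (A : Matrix (Fin (n+1)) (Fin (n+1)) ℝ)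
    (hpsd : A.PosSemidef)
    (h1 : A *ᵥ onesVec n = 0)
    (hx : A *ᵥ gridVec n = eR n - eL n) :
    A.rank = n ↔ IsUnit (centralBlock n A).det := by
  classical
  have hone_ne : onesVec n ≠ 0 := by
    intro h
    have := congrFun h ⟨0, by omega⟩
    simp [onesVec] at this
  have hone_mem : onesVec n ∈ LinearMap.ker A.mulVecLin := by
    simp [LinearMap.mem_ker, Matrix.mulVecLin_apply, h1]
  have hAT : Aᵀ = A := by simpa using hpsd.1.eq
  have hrank : A.rank + Module.finrank ℝ ↥(LinearMap.ker A.mulVecLin) = n + 1 := by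
    have h := LinearMap.finrank_range_add_finrank_ker A.mulVecLin
    rwa [Module.finrank_fintype_fun_eq_card, Fintype.card_fin] at h
  have hbdry : ∀ z : Fin (n+1) → ℝ, A *ᵥ z = 0 →
      z ⟨n, by omega⟩ = z ⟨0, by omega⟩ := by
    intro z hz
    have h2 : z ⬝ᵥ (eR n - eL n) = 0 := by
      rw [← hx, Matrix.dotProduct_mulVec, ← Matrix.mulVec_transpose, hAT, hz,
        zero_dotProduct]
    have hR : z ⬝ᵥ eR n = z ⟨n, by omega⟩ := by
      simp only [dotProduct, eR, mul_ite, mul_one, mul_zero]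
      rw [Finset.sum_eq_single (⟨n, by omega⟩ : Fin (n+1))]
      · simp
      · intro b _ hb
        have : b.1 ≠ n := fun h => hb (Fin.ext h)
        simp [this]
      · simp
    have hL : z ⬝ᵥ eL n = z ⟨0, by omega⟩ := by
      simp only [dotProduct, eL, mul_ite, mul_one, mul_zero]
      rw [Finset.sum_eq_single (⟨0, by omega⟩ : Fin (n+1))]
      · simp
      · intro b _ hb
        have : b.1 ≠ 0 := fun h => hb (Fin.ext h)
        simp [this]
      · simp
    have := dotProduct_sub z (eR n) (eL n)
    rw [h2, hR, hL] at this
    linarith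
  constructor
  · -- rank = n → central block invertible
    intro hrk
    rw [isUnit_iff_ne_zero]
    intro hdet0
    obtain ⟨v, hvne, hv0⟩ := (Matrix.exists_mulVec_eq_zero_iff).2 hdet0
    set w : Fin (n+1) → ℝ := padVec n v with hw
    have hdotw : w ⬝ᵥ (A *ᵥ w) = 0 := by
      rw [hw, dot_padVec, hv0]
      simp
    have hAw : A *ᵥ w = 0 := (hpsd.dotProduct_mulVec_zero_iff w).1 (by
      rw [star_trivial]; exact hdotw)
    have hwK : w ∈ LinearMap.ker A.mulVecLin := by
      simp [LinearMap.mem_ker, Matrix.mulVecLin_apply, hAw]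
    have hfr : Module.finrank ℝ ↥(LinearMap.ker A.mulVecLin) = 1 := by omega
    have hle : Submodule.span ℝ {onesVec n} ≤ LinearMap.ker A.mulVecLin := by
      rw [Submodule.span_le, Set.singleton_subset_iff]
      exact hone_mem
    have heq : Submodule.span ℝ {onesVec n} = LinearMap.ker A.mulVecLin :=
      Submodule.eq_of_le_of_finrank_eq hle
        (by rw [finrank_span_singleton hone_ne, hfr])
    obtain ⟨c, hc⟩ := Submodule.mem_span_singleton.1 (heq ▸ hwK)
    have hw0 : w ⟨0, by omega⟩ = 0 := by
      rw [hw]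
      simp [padVec]
    have hc0 : c = 0 := by
      have := congrFun hc ⟨0, by omega⟩
      simp only [Pi.smul_apply, onesVec, smul_eq_mul, mul_one] at this
      rw [hw0] at this
      exact this
    obtain ⟨k, hk⟩ := Function.ne_iff.1 hvne
    have hwk : w (interiorEmb n k) = v k := padVec_interiorEmb n v k
    rw [← hc, hc0] at hwk
    simp only [Pi.smul_apply, zero_smul, Pi.zero_apply] at hwk
    exact hk (by simpa using hwk.symm)
  · -- central block invertible → rank = n
    intro hdet
    have hdet0 : (centralBlock n A).det ≠ 0 := hdet.ne_zero
    have hKspan : LinearMap.ker A.mulVecLin = Submodule.span ℝ {onesVec n} := by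
      refine le_antisymm ?_ ?_
      · intro z hzK
        have hz : A *ᵥ z = 0 := by
          simpa [LinearMap.mem_ker, Matrix.mulVecLin_apply] using hzK
        have hzn : z ⟨n, by omega⟩ = z ⟨0, by omega⟩ := hbdry z hz
        set c : ℝ := z ⟨0, by omega⟩ with hcdef
        set w : Fin (n+1) → ℝ := z - c • onesVec n with hwdef
        set v : Fin (n-1) → ℝ := fun k => w (interiorEmb n k) with hvdef
        have hAw : A *ᵥ w = 0 := by
          rw [hwdef, Matrix.mulVec_sub, Matrix.mulVec_smul, h1, hz]
          simp
        have hwpad : w = padVec n v := by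
          funext i
          by_cases h : 0 < i.1 ∧ i.1 < n
          · rw [padVec]
            rw [dif_pos h, hvdef]
            show w i = w (interiorEmb n ⟨i.1 - 1, by omega⟩)
            congr 1
            exact (Fin.ext (by simp [interiorEmb]; omega)).symm
          · rw [padVec, dif_neg h]
            have hi := i.isLt
            have : i.1 = 0 ∨ i.1 = n := by omega
            rcases this with h0 | hn'
            · have hieq : i = ⟨0, by omega⟩ := Fin.ext h0
              rw [hieq, hwdef]
              simp [onesVec, hcdef]
            · have hieq : i = ⟨n, by omega⟩ := Fin.ext hn'
              rw [hieq, hwdef]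
              simp [onesVec, hcdef, hzn]
        have hv0 : centralBlock n A *ᵥ v = 0 := by
          funext k
          rw [← mulVec_padVec_interior, ← hwpad, hAw]
          rfl
        have hv : v = 0 := Matrix.eq_zero_of_mulVec_eq_zero hdet0 hv0
        have hw0 : w = 0 := by
          rw [hwpad, hv]
          funext i
          simp [padVec]
        have hzc : z = c • onesVec n := by
          funext i
          have h2 := congrFun hw0 i
          rw [hwdef] at h2
          simpa [sub_eq_zero] using h2
        rw [hzc]
        exact Submodule.smul_mem _ _ (Submodule.mem_span_singleton_self _)
      · rw [Submodule.span_le, Set.singleton_subset_iff]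
        exact hone_mem
    have hfr : Module.finrank ℝ ↥(LinearMap.ker A.mulVecLin) = 1 := by
      rw [hKspan]
      exact finrank_span_singleton hone_ne
    omega
end
end
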